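/- Discrete Noether theorem: let L be a local Lagrangian on k-cochains of a finite complex M, φ a field on shell (stationary for the action εL[φ]), and Δ a k-cochain. Then L is invariant under the infinitesimal transformation Δ (i.e. (d/dt)L[φ+tΔ]|_{t=0} = 0 as a function on vertices) if and only if the current j[φ] := (∂L[φ]/∂(δφ)) ⌢ Δ satisfies ∂j[φ] = 0. -/

import Mathlib

open Finset

/- Faces of the grid `I^d_N` are encoded by their doubled centers: a face is a
function `f : Fin d → ℕ` (with `f m ≤ 2N` for faces of the grid), whose odd
coordinates are the directions spanned by the face; its dimension is the number
of odd coordinates.  Vertices have all coordinates even. -/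

/-- The set of directions spanned by a face (its odd coordinates). -/
def oddSet (d : ℕ) (f : Fin d → ℕ) : Finset (Fin d) :=
  Finset.univ.filter (fun m => Odd (f m))

/-- The coorientation sign of a face `f` and its facet in direction `l`
(the paper's outer-normal-first convention for the lexicographic ordering):
`(−1)^{#{m < l : f m odd}}`. -/
def csgn (d : ℕ) (f : Fin d → ℕ) (l : Fin d) : ℤ :=
  (-1) ^ (Finset.univ.filter (fun m => m < l ∧ Odd (f m))).card

/-- The upper neighbour of `f` in direction `l`. -/
def fup (d : ℕ) (f : Fin d → ℕ) (l : Fin d) : Fin d → ℕ := Function.update f l (f l + 1)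

/-- The lower neighbour of `f` in direction `l`. -/
def fdn (d : ℕ) (f : Fin d → ℕ) (l : Fin d) : Fin d → ℕ := Function.update f l (f l - 1)

/-- The coboundary `δ` of a cochain: for a `(k+1)`-face `g`,
`[δφ](g) = Σ_{l : g l odd} ±(φ(g_{l↦g l+1}) − φ(g_{l↦g l−1}))`, the signed sum
of `φ` over the facets of `g`. -/
def cDelta {V : Type*} [AddCommGroup V] (d : ℕ) (φ : (Fin d → ℕ) → V) :
    (Fin d → ℕ) → V :=
  fun g => ∑ l : Fin d,
    if Odd (g l) then csgn d g l • (φ (fup d g l) - φ (fdn d g l)) else 0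

/-- The boundary `∂` of a cochain on the grid `I^d_N` (dual to `δ`): for a
`(k−1)`-face `v`, the signed sum of `φ` over the `k`-faces of the grid
containing `v`. -/
def cBdry {V : Type*} [AddCommGroup V] (d N : ℕ) (φ : (Fin d → ℕ) → V) :
    (Fin d → ℕ) → V :=
  fun v => ∑ l : Fin d,
    if Even (v l) then
      csgn d v l • ((if 0 < v l then φ (fdn d v l) else 0)
        - (if v l < 2 * N then φ (fup d v l) else 0))
    else 0
/- The (real-valued) cap-product: for a face `g = b…c` and a set `T` of
directions in which `g` can be extended downwards (`g m` even and positive), we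
get the face `a…c ⊇ g` spanning the directions of `g` together with `T`, and
the face `a…b` spanning the directions `T`; then
`[φ⌢ψ](b…c) = Σ_a ⟨a,b,c⟩ φ(a…c) ψ(a…b)`.
At a vertex `v` this specializes to `[φ⌢ψ](v) = Σ_{f : max f = v} φ(f) ψ(f)`,
the cap-product of cochains of equal dimension. -/

/-- The sign `⟨a,b,c⟩` for the extension of `g = b…c` by the directions `T`. -/
def capSg (d : ℕ) (g : Fin d → ℕ) (T : Finset (Fin d)) : ℤ :=
  (-1) ^ ((T ×ˢ oddSet d g).filter (fun p => p.2 < p.1)).card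

/-- The face `a…c` obtained by extending `g = b…c` downwards in directions `T`. -/
def bigFace (d : ℕ) (g : Fin d → ℕ) (T : Finset (Fin d)) : Fin d → ℕ :=
  fun m => if m ∈ T then g m - 1 else g m

/-- The face `a…b`, where `a = min (a…c)` and `b = min (b…c)`. -/
def lowFace (d : ℕ) (g : Fin d → ℕ) (T : Finset (Fin d)) : Fin d → ℕ :=
  fun m => if m ∈ T ∨ m ∈ oddSet d g then g m - 1 else g m

/-- The cap-product `[φ⌢ψ](b…c) = Σ_a ⟨a,b,c⟩ φ(a…c) ψ(a…b)` of real-valued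
cochains. -/
def capR (d : ℕ) (φ ψ : (Fin d → ℕ) → ℝ) : (Fin d → ℕ) → ℝ :=
  fun g => ∑ T : Finset (Fin d),
    if ∀ m ∈ T, Even (g m) ∧ 0 < g m then
      (capSg d g T : ℝ) * (φ (bigFace d g T) * ψ (lowFace d g T))
    else 0

/-- A face of the grid `I^d_N` (all doubled coordinates at most `2N`). -/
def inGrid (d N : ℕ) (f : Fin d → ℕ) : Prop := ∀ m, f m ≤ 2 * N

/-- A vertex of the grid `I^d_N` (all doubled coordinates even, at most `2N`). -/
def isVertex (d N : ℕ) (v : Fin d → ℕ) : Prop := ∀ m, Even (v m) ∧ v m ≤ 2 * N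

----------------------------------------------------------------
-- my auxiliary definitions
----------------------------------------------------------------

/-- The face below the vertex `v` spanning directions `T`. -/
def FT (d : ℕ) (v : Fin d → ℕ) (T : Finset (Fin d)) : Fin d → ℕ :=
  fun m => if m ∈ T then v m - 1 else v m

/-- The face below the vertex `v − 2e_l` spanning directions `T` (`l ∉ T`). -/
def G2 (d : ℕ) (v : Fin d → ℕ) (T : Finset (Fin d)) (l : Fin d) : Fin d → ℕ :=
  fun m => if m = l then v m - 2 else if m ∈ T then v m - 1 else v m

/-- The face spanning `insert l T` lying above `v` in direction `l`. -/
def HF (d : ℕ) (v : Fin d → ℕ) (T : Finset (Fin d)) (l : Fin d) : Fin d → ℕ :=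
  fun m => if m = l then v m + 1 else if m ∈ T then v m - 1 else v m

lemma oddSet_FT {d : ℕ} {v : Fin d → ℕ} (hv : ∀ m, Even (v m)) (S : Finset (Fin d))
    (hS : ∀ m ∈ S, 0 < v m) : oddSet d (FT d v S) = S := by
  ext m
  simp only [oddSet, mem_filter, mem_univ, true_and]; simp only [FT]
  by_cases hm : m ∈ S
  · simp only [hm, if_pos, iff_true]
    have h1 := hS m hm
    have h2 := hv m
    rw [Nat.even_iff] at h2; rw [Nat.odd_iff]; omega
  · simp only [hm, if_neg, iff_false, not_false_iff]
    have h2 := hv m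
    rw [Nat.even_iff] at h2; rw [Nat.odd_iff]; omega

lemma oddSet_HF {d : ℕ} {v : Fin d → ℕ} (hv : ∀ m, Even (v m)) (T : Finset (Fin d))
    (hT : ∀ m ∈ T, 0 < v m) (l : Fin d) (hl : l ∉ T) :
    oddSet d (HF d v T l) = insert l T := by
  ext m
  simp only [oddSet, mem_filter, mem_univ, true_and, mem_insert]; simp only [HF]
  by_cases hml : m = l
  · subst hml
    have h2 := hv m
    rw [Nat.even_iff] at h2
    rw [if_pos rfl, Nat.odd_iff]
    simp only [true_or, iff_true]
    omega
  · rw [if_neg hml]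
    have h2 := hv m
    rw [Nat.even_iff] at h2
    by_cases hm : m ∈ T
    · have h1 := hT m hm
      rw [if_pos hm, Nat.odd_iff]
      simp only [hml, hm, false_or, iff_true]
      omega
    · rw [if_neg hm, Nat.odd_iff]
      simp only [hml, hm, false_or, iff_false]
      omega

/-- At a vertex, the cap product is a sum over lower faces. -/
lemma capR_vertex {d : ℕ} (α β : (Fin d → ℕ) → ℝ) (v : Fin d → ℕ)
    (hv : ∀ m, Even (v m)) :
    capR d α β v = ∑ T : Finset (Fin d),
      if ∀ m ∈ T, 0 < v m then α (FT d v T) * β (FT d v T) else 0 := by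
  unfold capR
  refine Finset.sum_congr rfl fun T _ => ?_
  have ho : oddSet d v = ∅ := by
    ext m
    simp only [oddSet, mem_filter, mem_univ, true_and, notMem_empty, iff_false]
    exact (Nat.not_odd_iff_even.mpr (hv m))
  by_cases hT : ∀ m ∈ T, 0 < v m
  · rw [if_pos hT, if_pos (fun m hm => ⟨hv m, hT m hm⟩)]
    have hsg : capSg d v T = 1 := by simp [capSg, ho]
    have hbig : bigFace d v T = FT d v T := rfl
    have hlow : lowFace d v T = FT d v T := by
      funext m; simp [lowFace, FT, ho]
    rw [hsg, hbig, hlow]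
    push_cast; ring
  · rw [if_neg hT, if_neg]
    intro hc
    exact hT (fun m hm => (hc m hm).2)

/-- Reindexing sums over subsets containing / not containing `l`. -/
lemma sum_insert_erase {d : ℕ} (g : Finset (Fin d) → ℝ) (l : Fin d) :
    ∑ S : Finset (Fin d), (if l ∈ S then g S else 0)
      = ∑ T : Finset (Fin d), (if l ∉ T then g (insert l T) else 0) := by
  rw [← Finset.sum_filter, ← Finset.sum_filter]
  refine Finset.sum_nbij' (fun S => S.erase l) (fun T => insert l T) ?_ ?_ ?_ ?_ ?_
  · intro S hS; simp
  · intro T hT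
    simp only [mem_filter, mem_univ, true_and] at hT ⊢
    exact mem_insert_self l T
  · intro S hS
    simp only [mem_filter, mem_univ, true_and] at hS
    exact Finset.insert_erase hS
  · intro T hT
    simp only [mem_filter, mem_univ, true_and] at hT
    exact Finset.erase_insert hT
  · intro S hS
    simp only [mem_filter, mem_univ, true_and] at hS
    rw [Finset.insert_erase hS]

lemma ite_sum {c : Prop} [Decidable c] {ι : Type*} {s : Finset ι} (f : ι → ℝ) :
    (if c then ∑ i ∈ s, f i else 0) = ∑ i ∈ s, if c then f i else 0 := by
  split_ifs <;> simp

/-- The two halves of the sign partition. -/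
lemma sign_split {d : ℕ} {T : Finset (Fin d)} {l : Fin d} (hl : l ∉ T) {k : ℕ}
    (hk : T.card = k) :
    ((-1 : ℝ)) ^ ((T.filter (fun t => l < t)).card)
      = (-1) ^ k * (-1) ^ ((T.filter (fun t => t < l)).card) := by
  have hpart : (T.filter (fun t => l < t)).card + (T.filter (fun t => t < l)).card = k := by
    have hfe : T.filter (fun t => ¬ l < t) = T.filter (fun t => t < l) := by
      apply Finset.filter_congr
      intro t ht
      have htl : t ≠ l := fun h => hl (h ▸ ht)
      have : t.val ≠ l.val := fun h => htl (Fin.ext h)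
      simp only [not_lt, Fin.lt_def, Fin.le_def, eq_iff_iff]
      omega
    rw [← hk, ← Finset.card_filter_add_card_filter_not (s := T) (p := fun t => l < t), hfe]
  have h1 : ((-1 : ℝ)) ^ ((T.filter (fun t => l < t)).card)
      * ((-1 : ℝ)) ^ ((T.filter (fun t => t < l)).card) = (-1) ^ k := by
    rw [← pow_add, hpart]
  have h2 : ((-1 : ℝ)) ^ ((T.filter (fun t => t < l)).card)
      * ((-1 : ℝ)) ^ ((T.filter (fun t => t < l)).card) = 1 := by
    rw [← pow_add, ← two_mul, pow_mul]; norm_num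
  calc ((-1 : ℝ)) ^ ((T.filter (fun t => l < t)).card)
      = ((-1 : ℝ)) ^ ((T.filter (fun t => l < t)).card)
        * (((-1 : ℝ)) ^ ((T.filter (fun t => t < l)).card)
          * ((-1 : ℝ)) ^ ((T.filter (fun t => t < l)).card)) := by rw [h2, mul_one]
    _ = (-1) ^ k * (-1) ^ ((T.filter (fun t => t < l)).card) := by rw [← mul_assoc, h1]

lemma capSg_edge {d : ℕ} (e : Fin d → ℕ) (l : Fin d) (ho : oddSet d e = {l})
    (T : Finset (Fin d)) :
    (capSg d e T : ℝ) = (-1) ^ ((T.filter (fun t => l < t)).card) := by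
  unfold capSg
  rw [ho]
  have hset : ((T ×ˢ ({l} : Finset (Fin d))).filter (fun p => p.2 < p.1))
      = (T.filter (fun t => l < t)) ×ˢ {l} := by
    ext ⟨a, b⟩
    simp only [mem_filter, mem_product, mem_singleton]
    constructor
    · rintro ⟨⟨ha, hb⟩, h⟩
      subst hb
      exact ⟨⟨ha, h⟩, rfl⟩
    · rintro ⟨⟨ha, h⟩, hb⟩
      subst hb
      exact ⟨⟨ha, rfl⟩, h⟩
  rw [hset, card_product, card_singleton, mul_one]
  push_cast
  ring

lemma fdn_apply {d : ℕ} (v : Fin d → ℕ) (l m : Fin d) :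
    fdn d v l m = if m = l then v l - 1 else v m := Function.update_apply v l (v l - 1) m

lemma fup_apply {d : ℕ} (v : Fin d → ℕ) (l m : Fin d) :
    fup d v l m = if m = l then v l + 1 else v m := Function.update_apply v l (v l + 1) m

lemma oddSet_fdn {d : ℕ} {v : Fin d → ℕ} (hv : ∀ m, Even (v m)) {l : Fin d}
    (hl : 0 < v l) : oddSet d (fdn d v l) = {l} := by
  ext m
  simp only [oddSet, mem_filter, mem_univ, true_and, mem_singleton, fdn_apply]
  have h2 := hv m
  have h3 := hv l
  rw [Nat.even_iff] at h2 h3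
  by_cases hm : m = l
  · rw [if_pos hm, Nat.odd_iff]
    simp only [hm, iff_true]
    omega
  · rw [if_neg hm, Nat.odd_iff]
    simp only [hm, iff_false]
    omega

lemma oddSet_fup {d : ℕ} {v : Fin d → ℕ} (hv : ∀ m, Even (v m)) (l : Fin d) :
    oddSet d (fup d v l) = {l} := by
  ext m
  simp only [oddSet, mem_filter, mem_univ, true_and, mem_singleton, fup_apply]
  have h2 := hv m
  have h3 := hv l
  rw [Nat.even_iff] at h2 h3
  by_cases hm : m = l
  · rw [if_pos hm, Nat.odd_iff]
    simp only [hm, iff_true]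
    omega
  · rw [if_neg hm, Nat.odd_iff]
    simp only [hm, iff_false]
    omega

lemma capR_edge_dn {d : ℕ} (Q Δ : (Fin d → ℕ) → ℝ) (v : Fin d → ℕ)
    (hv : ∀ m, Even (v m)) (l : Fin d) (hl : 0 < v l) :
    capR d Q Δ (fdn d v l) = ∑ T : Finset (Fin d),
      if l ∉ T ∧ ∀ m ∈ T, 0 < v m then
        ((-1 : ℝ)) ^ ((T.filter (fun t => l < t)).card)
          * (Q (FT d v (insert l T)) * Δ (G2 d v T l))
      else 0 := by
  unfold capR
  refine Finset.sum_congr rfl fun T _ => ?_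
  have hvl := hv l
  rw [Nat.even_iff] at hvl
  have hodd1 : ¬ Even (v l - 1) := by rw [Nat.even_iff]; omega
  have hcond : (∀ m ∈ T, Even (fdn d v l m) ∧ 0 < fdn d v l m)
      ↔ (l ∉ T ∧ ∀ m ∈ T, 0 < v m) := by
    constructor
    · intro h
      have hlT : l ∉ T := by
        intro hmem
        have := (h l hmem).1
        rw [fdn_apply, if_pos rfl] at this
        exact hodd1 this
      refine ⟨hlT, fun m hm => ?_⟩
      have := (h m hm).2
      rwa [fdn_apply, if_neg (show m ≠ l from fun he => hlT (he ▸ hm))] at this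
    · rintro ⟨hlT, h⟩ m hm
      have hml : m ≠ l := fun he => hlT (he ▸ hm)
      rw [fdn_apply, if_neg hml]
      exact ⟨hv m, h m hm⟩
  by_cases hT : l ∉ T ∧ ∀ m ∈ T, 0 < v m
  · rw [if_pos (hcond.mpr hT), if_pos hT]
    have ho := oddSet_fdn hv hl
    have hbig : bigFace d (fdn d v l) T = FT d v (insert l T) := by
      funext m
      simp only [bigFace, FT, fdn_apply, mem_insert]
      by_cases hm : m = l
      · subst hm
        rw [if_neg hT.1, if_pos rfl, if_pos (Or.inl rfl)]
      · by_cases hmT : m ∈ T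
        · rw [if_pos hmT, if_neg hm, if_pos (Or.inr hmT)]
        · rw [if_neg hmT, if_neg hm, if_neg (by tauto)]
    have hlow : lowFace d (fdn d v l) T = G2 d v T l := by
      funext m
      simp only [lowFace, G2, fdn_apply, ho, mem_singleton]
      by_cases hm : m = l
      · subst hm
        rw [if_pos (Or.inr rfl), if_pos rfl, if_pos rfl]
        omega
      · by_cases hmT : m ∈ T
        · rw [if_pos (Or.inl hmT), if_neg hm, if_neg hm, if_pos hmT]
        · rw [if_neg (by tauto), if_neg hm, if_neg hm, if_neg hmT]
    rw [hbig, hlow, capSg_edge _ _ ho]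
  · rw [if_neg (fun h => hT (hcond.mp h)), if_neg hT]

lemma capR_edge_up {d : ℕ} (Q Δ : (Fin d → ℕ) → ℝ) (v : Fin d → ℕ)
    (hv : ∀ m, Even (v m)) (l : Fin d) :
    capR d Q Δ (fup d v l) = ∑ T : Finset (Fin d),
      if l ∉ T ∧ ∀ m ∈ T, 0 < v m then
        ((-1 : ℝ)) ^ ((T.filter (fun t => l < t)).card)
          * (Q (HF d v T l) * Δ (FT d v T))
      else 0 := by
  unfold capR
  refine Finset.sum_congr rfl fun T _ => ?_
  have hvl := hv l
  rw [Nat.even_iff] at hvl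
  have hodd1 : ¬ Even (v l + 1) := by rw [Nat.even_iff]; omega
  have hcond : (∀ m ∈ T, Even (fup d v l m) ∧ 0 < fup d v l m)
      ↔ (l ∉ T ∧ ∀ m ∈ T, 0 < v m) := by
    constructor
    · intro h
      have hlT : l ∉ T := by
        intro hmem
        have := (h l hmem).1
        rw [fup_apply, if_pos rfl] at this
        exact hodd1 this
      refine ⟨hlT, fun m hm => ?_⟩
      have := (h m hm).2
      rwa [fup_apply, if_neg (show m ≠ l from fun he => hlT (he ▸ hm))] at this
    · rintro ⟨hlT, h⟩ m hm
      have hml : m ≠ l := fun he => hlT (he ▸ hm)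
      rw [fup_apply, if_neg hml]
      exact ⟨hv m, h m hm⟩
  by_cases hT : l ∉ T ∧ ∀ m ∈ T, 0 < v m
  · rw [if_pos (hcond.mpr hT), if_pos hT]
    have ho := oddSet_fup hv l
    have hbig : bigFace d (fup d v l) T = HF d v T l := by
      funext m
      simp only [bigFace, HF, fup_apply]
      by_cases hm : m = l
      · subst hm
        rw [if_neg hT.1, if_pos rfl, if_pos rfl]
      · by_cases hmT : m ∈ T
        · rw [if_pos hmT, if_neg hm, if_neg hm, if_pos hmT]
        · rw [if_neg hmT, if_neg hm, if_neg hm, if_neg hmT]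
    have hlow : lowFace d (fup d v l) T = FT d v T := by
      funext m
      simp only [lowFace, FT, fup_apply, ho, mem_singleton]
      by_cases hm : m = l
      · subst hm
        rw [if_pos (Or.inr rfl), if_pos rfl, if_neg hT.1]
        omega
      · by_cases hmT : m ∈ T
        · rw [if_pos (Or.inl hmT), if_neg hm, if_pos hmT]
        · rw [if_neg (by tauto), if_neg hm, if_neg hmT]
    rw [hbig, hlow, capSg_edge _ _ ho]
  · rw [if_neg (fun h => hT (hcond.mp h)), if_neg hT]

lemma odd_iff_mem {d : ℕ} (f : Fin d → ℕ) (m : Fin d) : Odd (f m) ↔ m ∈ oddSet d f := by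
  simp [oddSet]

lemma csgn_real {d : ℕ} (f : Fin d → ℕ) (l : Fin d) :
    (csgn d f l : ℝ) = (-1) ^ ((Finset.univ.filter (fun m => m < l ∧ Odd (f m))).card) := by
  unfold csgn; push_cast; ring

lemma csgn_vertex {d : ℕ} {v : Fin d → ℕ} (hv : ∀ m, Even (v m)) (l : Fin d) :
    csgn d v l = 1 := by
  unfold csgn
  have : (Finset.univ.filter (fun m => m < l ∧ Odd (v m))) = ∅ := by
    ext m
    simp only [mem_filter, mem_univ, true_and, notMem_empty, iff_false, not_and]
    intro _
    exact (Nat.not_odd_iff_even.mpr (hv m))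
  rw [this]
  simp

lemma filter_lt_FT {d : ℕ} {v : Fin d → ℕ} (hv : ∀ m, Even (v m)) (T : Finset (Fin d))
    (hT : ∀ m ∈ T, 0 < v m) (l : Fin d) :
    (Finset.univ.filter (fun m => m < l ∧ Odd (FT d v T m)))
      = T.filter (fun m => m < l) := by
  have hoT := oddSet_FT hv T hT
  ext m
  simp only [mem_filter, mem_univ, true_and]
  rw [odd_iff_mem, hoT]
  tauto

lemma cBdry_FT {d N : ℕ} (α : (Fin d → ℕ) → ℝ) {v : Fin d → ℕ} (hv : ∀ m, Even (v m))
    (T : Finset (Fin d)) (hT : ∀ m ∈ T, 0 < v m) :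
    cBdry d N α (FT d v T) = ∑ l : Fin d,
      if l ∉ T then
        ((-1 : ℝ)) ^ ((T.filter (fun m => m < l)).card)
          * ((if 0 < v l then α (FT d v (insert l T)) else 0)
            - (if v l < 2 * N then α (HF d v T l) else 0))
      else 0 := by
  unfold cBdry
  refine Finset.sum_congr rfl fun l _ => ?_
  have hvl := hv l
  by_cases hlT : l ∈ T
  · have h1 := hT l hlT
    have hFTl : FT d v T l = v l - 1 := by simp [FT, hlT]
    rw [Nat.even_iff] at hvl
    rw [if_neg, if_neg (by simpa using hlT)]
    rw [hFTl, Nat.even_iff]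
    omega
  · have hFTl : FT d v T l = v l := by simp [FT, hlT]
    rw [if_pos (by rw [hFTl]; exact hvl), if_pos hlT]
    have hfdn : fdn d (FT d v T) l = FT d v (insert l T) := by
      funext m
      simp only [fdn_apply, FT, mem_insert, hFTl]
      by_cases hm : m = l
      · subst hm; rw [if_pos rfl, if_pos (Or.inl rfl), if_neg hlT]
      · rw [if_neg hm]
        by_cases hmT : m ∈ T
        · rw [if_pos hmT, if_pos (Or.inr hmT)]
        · rw [if_neg hmT, if_neg (by tauto)]
    have hfup : fup d (FT d v T) l = HF d v T l := by
      funext m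
      simp only [fup_apply, FT, HF, hFTl]
      by_cases hm : m = l
      · subst hm; rw [if_pos rfl, if_pos rfl, if_neg hlT]
      · rw [if_neg hm, if_neg hm]
    have hcs : (csgn d (FT d v T) l : ℝ)
        = (-1) ^ ((T.filter (fun m => m < l)).card) := by
      rw [csgn_real, filter_lt_FT hv T hT]
    rw [zsmul_eq_mul, hcs, hfdn, hfup, hFTl]

lemma cDelta_FT {d : ℕ} (Δ : (Fin d → ℕ) → ℝ) {v : Fin d → ℕ} (hv : ∀ m, Even (v m))
    (S : Finset (Fin d)) (hS : ∀ m ∈ S, 0 < v m) :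
    cDelta d Δ (FT d v S) = ∑ l : Fin d,
      if l ∈ S then
        ((-1 : ℝ)) ^ ((S.filter (fun m => m < l)).card)
          * (Δ (FT d v (S.erase l)) - Δ (G2 d v (S.erase l) l))
      else 0 := by
  unfold cDelta
  refine Finset.sum_congr rfl fun l _ => ?_
  have hoS := oddSet_FT hv S hS
  have hodd : Odd (FT d v S l) ↔ l ∈ S := by rw [odd_iff_mem, hoS]
  by_cases hlS : l ∈ S
  · have h1 := hS l hlS
    have hFTl : FT d v S l = v l - 1 := by simp [FT, hlS]
    rw [if_pos (hodd.mpr hlS), if_pos hlS]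
    have hfup : fup d (FT d v S) l = FT d v (S.erase l) := by
      funext m
      simp only [fup_apply, FT, mem_erase, hFTl]
      by_cases hm : m = l
      · subst hm
        rw [if_pos rfl, if_neg (show ¬(m ≠ m ∧ m ∈ S) from by simp), if_pos hlS]
        omega
      · rw [if_neg hm]
        by_cases hmS : m ∈ S
        · rw [if_pos hmS, if_pos ⟨hm, hmS⟩]
        · rw [if_neg hmS, if_neg (by tauto)]
    have hfdn : fdn d (FT d v S) l = G2 d v (S.erase l) l := by
      funext m
      simp only [fdn_apply, FT, G2, mem_erase, hFTl]
      by_cases hm : m = l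
      · subst hm
        rw [if_pos rfl, if_pos rfl, if_pos hlS]
        omega
      · rw [if_neg hm, if_neg hm]
        by_cases hmS : m ∈ S
        · rw [if_pos hmS, if_pos ⟨hm, hmS⟩]
        · rw [if_neg hmS, if_neg (by tauto)]
    have hcs : (csgn d (FT d v S) l : ℝ)
        = (-1) ^ ((S.filter (fun m => m < l)).card) := by
      rw [csgn_real, filter_lt_FT hv S hS]
    rw [zsmul_eq_mul, hcs, hfup, hfdn]
  · rw [if_neg (fun h => hlS (hodd.mp h)), if_neg hlS]

lemma leibniz {d N : ℕ} (k : ℕ) (Q Δ : (Fin d → ℕ) → ℝ)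
    (hQ : ∀ f, Q f ≠ 0 → (oddSet d f).card = k + 1)
    (v : Fin d → ℕ) (hv : ∀ m, Even (v m)) :
    cBdry d N (capR d Q Δ) v
      = (-1 : ℝ) ^ k * (capR d (cBdry d N Q) Δ v - capR d Q (cDelta d Δ) v) := by
  classical
  -- Step 1: expand the left-hand side
  have hL : cBdry d N (capR d Q Δ) v = ∑ l : Fin d, ∑ T : Finset (Fin d),
      ((if 0 < v l then
          (if l ∉ T ∧ ∀ m ∈ T, 0 < v m then
            ((-1 : ℝ)) ^ ((T.filter (fun t => l < t)).card)
              * (Q (FT d v (insert l T)) * Δ (G2 d v T l)) else 0) else 0)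
        - (if v l < 2 * N then
          (if l ∉ T ∧ ∀ m ∈ T, 0 < v m then
            ((-1 : ℝ)) ^ ((T.filter (fun t => l < t)).card)
              * (Q (HF d v T l) * Δ (FT d v T)) else 0) else 0)) := by
    unfold cBdry
    refine Finset.sum_congr rfl fun l _ => ?_
    rw [if_pos (hv l), csgn_vertex hv l, one_smul]
    have e1 : (if 0 < v l then capR d Q Δ (fdn d v l) else 0)
        = ∑ T : Finset (Fin d), (if 0 < v l then
            (if l ∉ T ∧ ∀ m ∈ T, 0 < v m then
              ((-1 : ℝ)) ^ ((T.filter (fun t => l < t)).card)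
                * (Q (FT d v (insert l T)) * Δ (G2 d v T l)) else 0) else 0) := by
      by_cases h0 : 0 < v l
      · rw [if_pos h0, capR_edge_dn Q Δ v hv l h0]
        exact Finset.sum_congr rfl fun T _ => by rw [if_pos h0]
      · rw [if_neg h0]
        simp [if_neg h0]
    have e2 : (if v l < 2 * N then capR d Q Δ (fup d v l) else 0)
        = ∑ T : Finset (Fin d), (if v l < 2 * N then
            (if l ∉ T ∧ ∀ m ∈ T, 0 < v m then
              ((-1 : ℝ)) ^ ((T.filter (fun t => l < t)).card)
                * (Q (HF d v T l) * Δ (FT d v T)) else 0) else 0) := by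
      by_cases h2 : v l < 2 * N
      · rw [if_pos h2, capR_edge_up Q Δ v hv l]
        exact Finset.sum_congr rfl fun T _ => by rw [if_pos h2]
      · rw [if_neg h2]
        simp [if_neg h2]
    rw [e1, e2, ← Finset.sum_sub_distrib]
  -- Step 2: expand the first cap product on the right
  have hB : capR d (cBdry d N Q) Δ v = ∑ l : Fin d, ∑ T : Finset (Fin d),
      (if ∀ m ∈ T, 0 < v m then
        (if l ∉ T then
          ((-1 : ℝ)) ^ ((T.filter (fun m => m < l)).card)
            * ((if 0 < v l then Q (FT d v (insert l T)) else 0)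
              - (if v l < 2 * N then Q (HF d v T l) else 0)) else 0) * Δ (FT d v T)
      else 0) := by
    rw [capR_vertex _ _ v hv, Finset.sum_comm]
    refine Finset.sum_congr rfl fun T _ => ?_
    by_cases hT : ∀ m ∈ T, 0 < v m
    · rw [if_pos hT, cBdry_FT Q hv T hT, Finset.sum_mul]
      exact Finset.sum_congr rfl fun l _ => by rw [if_pos hT]
    · rw [if_neg hT]
      simp [if_neg hT]
  -- Step 3: expand the second cap product on the right
  have hC : capR d Q (cDelta d Δ) v = ∑ l : Fin d, ∑ T : Finset (Fin d),
      (if l ∉ T then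
        (if 0 < v l ∧ ∀ m ∈ T, 0 < v m then
          Q (FT d v (insert l T))
            * (((-1 : ℝ)) ^ ((T.filter (fun m => m < l)).card)
              * (Δ (FT d v T) - Δ (G2 d v T l))) else 0) else 0) := by
    have step1 : capR d Q (cDelta d Δ) v = ∑ S : Finset (Fin d), ∑ l : Fin d,
        (if l ∈ S then
          (if ∀ m ∈ S, 0 < v m then
            Q (FT d v S)
              * (((-1 : ℝ)) ^ ((S.filter (fun m => m < l)).card)
                * (Δ (FT d v (S.erase l)) - Δ (G2 d v (S.erase l) l))) else 0) else 0) := by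
      rw [capR_vertex _ _ v hv]
      refine Finset.sum_congr rfl fun S _ => ?_
      by_cases hS : ∀ m ∈ S, 0 < v m
      · rw [if_pos hS, cDelta_FT Δ hv S hS, Finset.mul_sum]
        refine Finset.sum_congr rfl fun l _ => ?_
        by_cases hlS : l ∈ S
        · rw [if_pos hlS, if_pos hlS, if_pos hS]
        · rw [if_neg hlS, if_neg hlS, mul_zero]
      · rw [if_neg hS]
        simp [if_neg hS]
    rw [step1, Finset.sum_comm]
    refine Finset.sum_congr rfl fun l _ => ?_
    rw [sum_insert_erase (fun S =>
      (if ∀ m ∈ S, 0 < v m then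
        Q (FT d v S)
          * (((-1 : ℝ)) ^ ((S.filter (fun m => m < l)).card)
            * (Δ (FT d v (S.erase l)) - Δ (G2 d v (S.erase l) l))) else 0)) l]
    refine Finset.sum_congr rfl fun T _ => ?_
    by_cases hlT : l ∉ T
    · rw [if_pos hlT, if_pos hlT]
      have hmem : (∀ m ∈ insert l T, 0 < v m) ↔ (0 < v l ∧ ∀ m ∈ T, 0 < v m) :=
        Finset.forall_mem_insert _ _ _
      have her : (insert l T).erase l = T := Finset.erase_insert hlT
      have hfil : ((insert l T).filter (fun m => m < l)).card
          = (T.filter (fun m => m < l)).card := by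
        rw [Finset.filter_insert, if_neg (lt_irrefl l)]
      by_cases hc : 0 < v l ∧ ∀ m ∈ T, 0 < v m
      · rw [if_pos (hmem.mpr hc), if_pos hc, her, hfil]
      · rw [if_neg (fun h => hc (hmem.mp h)), if_neg hc]
    · rw [if_neg hlT, if_neg hlT]
  -- Step 4: combine
  rw [hL, hB, hC, ← Finset.sum_sub_distrib, Finset.mul_sum]
  refine Finset.sum_congr rfl fun l _ => ?_
  rw [← Finset.sum_sub_distrib, Finset.mul_sum]
  refine Finset.sum_congr rfl fun T _ => ?_
  by_cases hlT : l ∈ T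
  · simp [hlT]
  by_cases hpos : ∀ m ∈ T, 0 < v m
  · have hc2 : l ∉ T ∧ ∀ m ∈ T, 0 < v m := ⟨hlT, hpos⟩
    rw [if_pos hc2, if_pos hc2, if_pos hpos, if_pos hlT, if_pos hlT]
    simp only [and_iff_left hpos]
    by_cases hk : T.card = k
    · have hs := sign_split hlT hk
      rw [hs]
      by_cases h0 : 0 < v l
      · rw [if_pos h0, if_pos h0, if_pos h0]
        by_cases h2 : v l < 2 * N
        · rw [if_pos h2, if_pos h2]; ring
        · rw [if_neg h2, if_neg h2]; ring
      · rw [if_neg h0, if_neg h0, if_neg h0]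
        by_cases h2 : v l < 2 * N
        · rw [if_pos h2, if_pos h2]; ring
        · rw [if_neg h2, if_neg h2]; ring
    · have hq2 : Q (HF d v T l) = 0 := by
        by_contra h
        have hc := hQ _ h
        rw [oddSet_HF hv T hpos l hlT, Finset.card_insert_of_notMem hlT] at hc
        exact hk (by omega)
      have hq1 : 0 < v l → Q (FT d v (insert l T)) = 0 := by
        intro h0
        by_contra h
        have hc := hQ _ h
        rw [oddSet_FT hv (insert l T) (by
          intro m hm
          rcases Finset.mem_insert.mp hm with rfl | hm'
          · exact h0
          · exact hpos m hm'), Finset.card_insert_of_notMem hlT] at hc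
        exact hk (by omega)
      rw [hq2]
      by_cases h0 : 0 < v l
      · rw [if_pos h0, if_pos h0, if_pos h0, hq1 h0]
        by_cases h2 : v l < 2 * N
        · rw [if_pos h2]; simp [ite_self]
        · rw [if_neg h2]; simp [ite_self]
      · rw [if_neg h0, if_neg h0, if_neg h0]
        by_cases h2 : v l < 2 * N
        · rw [if_pos h2]; simp [ite_self]
        · rw [if_neg h2]; simp [ite_self]
  · have hnc2 : ¬ (l ∉ T ∧ ∀ m ∈ T, 0 < v m) := fun h => hpos h.2
    rw [if_neg hnc2, if_neg hnc2, if_neg hpos, if_pos hlT,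
      if_neg (show ¬ (0 < v l ∧ ∀ m ∈ T, 0 < v m) from fun h => hpos h.2)]
    simp

lemma csgn_congr {d : ℕ} {f g : Fin d → ℕ} (l : Fin d) (h : ∀ m, m ≠ l → f m = g m) :
    csgn d f l = csgn d g l := by
  unfold csgn
  have hfe : Finset.univ.filter (fun m => m < l ∧ Odd (f m))
      = Finset.univ.filter (fun m => m < l ∧ Odd (g m)) := by
    apply Finset.filter_congr
    intro m _
    by_cases hml : m < l
    · have hne : m ≠ l := ne_of_lt hml
      rw [h m hne]
    · simp [hml]
  rw [hfe]

/-- The sum of the cap product over all vertices of the grid. -/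
lemma sum_vertices {d N : ℕ} (α β : (Fin d → ℕ) → ℝ) :
    ∑ w : Fin d → Fin (N + 1), capR d α β (fun m => 2 * (w m : ℕ))
      = ∑ f ∈ Fintype.piFinset (fun _ : Fin d => Finset.range (2 * N + 1)), α f * β f := by
  classical
  have hstep : ∀ w : Fin d → Fin (N + 1), capR d α β (fun m => 2 * (w m : ℕ))
      = ∑ T : Finset (Fin d), if ∀ m ∈ T, 0 < 2 * (w m : ℕ) then
          α (FT d (fun m => 2 * (w m : ℕ)) T) * β (FT d (fun m => 2 * (w m : ℕ)) T) else 0 :=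
    fun w => capR_vertex α β _ (fun m => ⟨(w m : ℕ), by ring⟩)
  rw [Finset.sum_congr rfl (fun w _ => hstep w)]
  rw [← Finset.sum_product']
  rw [← Finset.sum_filter]
  refine Finset.sum_nbij' (fun p => FT d (fun m => 2 * ((p.1 m : ℕ))) p.2)
    (fun f => ((fun m => (⟨min ((f m + 1) / 2) N, by omega⟩ : Fin (N + 1))), oddSet d f))
    ?_ ?_ ?_ ?_ ?_
  · rintro ⟨w, T⟩ hp
    rw [Fintype.mem_piFinset]
    intro m
    rw [Finset.mem_range]
    have h1 : (w m : ℕ) < N + 1 := (w m).isLt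
    simp only [FT]
    split <;> omega
  · intro f hf
    rw [Fintype.mem_piFinset] at hf
    simp only [Finset.mem_filter, Finset.mem_univ, true_and]
    refine ⟨Finset.mem_univ _, ?_⟩
    intro m hm
    rw [← odd_iff_mem] at hm
    rw [Nat.odd_iff] at hm
    have h1 : f m < 2 * N + 1 := Finset.mem_range.mp (hf m)
    show 0 < 2 * min ((f m + 1) / 2) N
    omega
  · rintro ⟨w, T⟩ hp
    simp only [Finset.mem_filter, Finset.mem_univ, true_and] at hp
    have hpos : ∀ m ∈ T, 0 < 2 * (w m : ℕ) := hp.2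
    have hoT : oddSet d (FT d (fun m => 2 * (w m : ℕ)) T) = T :=
      oddSet_FT (fun m => ⟨(w m : ℕ), by ring⟩) T hpos
    refine Prod.ext ?_ ?_
    · funext m
      apply Fin.ext
      simp only
      have h1 : (w m : ℕ) < N + 1 := (w m).isLt
      show min ((FT d (fun m => 2 * (w m : ℕ)) T m + 1) / 2) N = (w m : ℕ)
      by_cases hm : m ∈ T
      · have h2 := hpos m hm
        simp only [FT, if_pos hm]
        omega
      · simp only [FT, if_neg hm]
        omega
    · exact hoT
  · intro f hf
    rw [Fintype.mem_piFinset] at hf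
    funext m
    have h1 : f m < 2 * N + 1 := Finset.mem_range.mp (hf m)
    simp only [FT]
    by_cases ho : Odd (f m)
    · rw [if_pos ((odd_iff_mem f m).mp ho)]
      rw [Nat.odd_iff] at ho
      show 2 * min ((f m + 1) / 2) N - 1 = f m
      omega
    · rw [if_neg (fun h => ho ((odd_iff_mem f m).mpr h))]
      rw [Nat.odd_iff] at ho
      show 2 * min ((f m + 1) / 2) N = f m
      omega
  · rintro ⟨w, T⟩ hp
    rfl

/-- Summing a cochain against the coboundary of an indicator gives the boundary. -/
lemma sum_cDelta_ind {d N : ℕ} (α : (Fin d → ℕ) → ℝ) (f₀ : Fin d → ℕ)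
    (h0 : ∀ m, f₀ m < 2 * N + 1) :
    ∑ f ∈ Fintype.piFinset (fun _ : Fin d => Finset.range (2 * N + 1)),
      α f * cDelta d (fun g => if g = f₀ then (1 : ℝ) else 0) f = cBdry d N α f₀ := by
  classical
  unfold cDelta cBdry
  have hms : ∀ f : Fin d → ℕ, α f * (∑ l : Fin d, if Odd (f l) then
        csgn d f l • ((if fup d f l = f₀ then (1:ℝ) else 0) - (if fdn d f l = f₀ then 1 else 0)) else 0)
      = ∑ l : Fin d, α f * (if Odd (f l) then
        csgn d f l • ((if fup d f l = f₀ then (1:ℝ) else 0) - (if fdn d f l = f₀ then 1 else 0)) else 0) :=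
    fun f => Finset.mul_sum _ _ _
  rw [Finset.sum_congr rfl (fun f _ => hms f), Finset.sum_comm]
  refine Finset.sum_congr rfl fun l _ => ?_
  have key : ∀ f ∈ Fintype.piFinset (fun _ : Fin d => Finset.range (2 * N + 1)),
      α f * (if Odd (f l) then
        csgn d f l • ((if fup d f l = f₀ then (1:ℝ) else 0) - (if fdn d f l = f₀ then 1 else 0)) else 0)
      = (if (Even (f₀ l) ∧ 0 < f₀ l) ∧ f = fdn d f₀ l then (csgn d f₀ l : ℝ) * α f else 0)
        - (if (Even (f₀ l) ∧ f₀ l < 2 * N) ∧ f = fup d f₀ l then (csgn d f₀ l : ℝ) * α f else 0) := by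
    intro f hf
    rw [Fintype.mem_piFinset] at hf
    have hfl : f l < 2 * N + 1 := Finset.mem_range.mp (hf l)
    by_cases ho : Odd (f l)
    · rw [if_pos ho]
      have hol : f l % 2 = 1 := Nat.odd_iff.mp ho
      by_cases h1 : fup d f l = f₀
      · have hfl0 : f₀ l = f l + 1 := by
          have := congrFun h1 l
          rw [fup_apply, if_pos rfl] at this
          omega
        have hfm : ∀ m, m ≠ l → f₀ m = f m := by
          intro m hm
          have := congrFun h1 m
          rw [fup_apply, if_neg hm] at this
          omega
        have hfd : f = fdn d f₀ l := by
          funext m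
          rw [fdn_apply]
          by_cases hm : m = l
          · rw [if_pos hm, hm]; omega
          · rw [if_neg hm, hfm m hm]
        have hc1 : (Even (f₀ l) ∧ 0 < f₀ l) ∧ f = fdn d f₀ l :=
          ⟨⟨by rw [Nat.even_iff]; omega, by omega⟩, hfd⟩
        have h2 : fdn d f l ≠ f₀ := by
          intro hc
          have := congrFun hc l
          rw [fdn_apply, if_pos rfl] at this
          omega
        have hne : ¬ ((Even (f₀ l) ∧ f₀ l < 2 * N) ∧ f = fup d f₀ l) := by
          rintro ⟨-, hc⟩
          have := congrFun hc l
          rw [fup_apply, if_pos rfl] at this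
          omega
        have hcs : csgn d f l = csgn d f₀ l :=
          csgn_congr l (fun m hm => (hfm m hm).symm)
        rw [if_pos h1, if_neg h2, if_pos hc1, if_neg hne, zsmul_eq_mul, hcs]
        ring
      · by_cases h2 : fdn d f l = f₀
        · have hfl0 : f₀ l = f l - 1 := by
            have := congrFun h2 l
            rw [fdn_apply, if_pos rfl] at this
            omega
          have hfm : ∀ m, m ≠ l → f₀ m = f m := by
            intro m hm
            have := congrFun h2 m
            rw [fdn_apply, if_neg hm] at this
            omega
          have hfu : f = fup d f₀ l := by
            funext m
            rw [fup_apply]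
            by_cases hm : m = l
            · rw [if_pos hm, hm]; omega
            · rw [if_neg hm, hfm m hm]
          have hc2 : (Even (f₀ l) ∧ f₀ l < 2 * N) ∧ f = fup d f₀ l :=
            ⟨⟨by rw [Nat.even_iff]; omega, by omega⟩, hfu⟩
          have hne : ¬ ((Even (f₀ l) ∧ 0 < f₀ l) ∧ f = fdn d f₀ l) := by
            rintro ⟨⟨-, hp⟩, hc⟩
            have := congrFun hc l
            rw [fdn_apply, if_pos rfl] at this
            omega
          have hcs : csgn d f l = csgn d f₀ l :=
            csgn_congr l (fun m hm => (hfm m hm).symm)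
          rw [if_neg h1, if_pos h2, if_pos hc2, if_neg hne, zsmul_eq_mul, hcs]
          ring
        · have hne1 : ¬ ((Even (f₀ l) ∧ 0 < f₀ l) ∧ f = fdn d f₀ l) := by
            rintro ⟨⟨he, hp⟩, rfl⟩
            apply h1
            funext m
            rw [fup_apply]
            by_cases hm : m = l
            · rw [if_pos hm, hm, fdn_apply, if_pos rfl]; omega
            · rw [if_neg hm, fdn_apply, if_neg hm]
          have hne2 : ¬ ((Even (f₀ l) ∧ f₀ l < 2 * N) ∧ f = fup d f₀ l) := by
            rintro ⟨⟨he, hp⟩, rfl⟩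
            apply h2
            funext m
            rw [fdn_apply]
            by_cases hm : m = l
            · rw [if_pos hm, hm, fup_apply, if_pos rfl]; omega
            · rw [if_neg hm, fup_apply, if_neg hm]
          rw [if_neg h1, if_neg h2, if_neg hne1, if_neg hne2]
          simp
    · rw [if_neg ho]
      rw [Nat.odd_iff] at ho
      have hne1 : ¬ ((Even (f₀ l) ∧ 0 < f₀ l) ∧ f = fdn d f₀ l) := by
        rintro ⟨⟨he, hp⟩, rfl⟩
        rw [Nat.even_iff] at he
        rw [fdn_apply, if_pos rfl] at ho
        omega
      have hne2 : ¬ ((Even (f₀ l) ∧ f₀ l < 2 * N) ∧ f = fup d f₀ l) := by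
        rintro ⟨⟨he, hp⟩, rfl⟩
        rw [Nat.even_iff] at he
        rw [fup_apply, if_pos rfl] at ho
        omega
      rw [if_neg hne1, if_neg hne2]
      simp
  rw [Finset.sum_congr rfl key, Finset.sum_sub_distrib]
  have hsum1 : ∑ f ∈ Fintype.piFinset (fun _ : Fin d => Finset.range (2 * N + 1)),
      (if (Even (f₀ l) ∧ 0 < f₀ l) ∧ f = fdn d f₀ l then (csgn d f₀ l : ℝ) * α f else 0)
      = if Even (f₀ l) ∧ 0 < f₀ l then (csgn d f₀ l : ℝ) * α (fdn d f₀ l) else 0 := by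
    by_cases hC : Even (f₀ l) ∧ 0 < f₀ l
    · have hmem : fdn d f₀ l ∈ Fintype.piFinset (fun _ : Fin d => Finset.range (2 * N + 1)) := by
        rw [Fintype.mem_piFinset]
        intro m
        rw [Finset.mem_range, fdn_apply]
        have := h0 m
        have := h0 l
        split <;> omega
      rw [if_pos hC]
      simp only [hC, true_and]
      rw [Finset.sum_ite_eq' _ (fdn d f₀ l) (fun f => (csgn d f₀ l : ℝ) * α f), if_pos hmem]
    · simp [hC]
  have hsum2 : ∑ f ∈ Fintype.piFinset (fun _ : Fin d => Finset.range (2 * N + 1)),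
      (if (Even (f₀ l) ∧ f₀ l < 2 * N) ∧ f = fup d f₀ l then (csgn d f₀ l : ℝ) * α f else 0)
      = if Even (f₀ l) ∧ f₀ l < 2 * N then (csgn d f₀ l : ℝ) * α (fup d f₀ l) else 0 := by
    by_cases hC : Even (f₀ l) ∧ f₀ l < 2 * N
    · have hmem : fup d f₀ l ∈ Fintype.piFinset (fun _ : Fin d => Finset.range (2 * N + 1)) := by
        rw [Fintype.mem_piFinset]
        intro m
        rw [Finset.mem_range, fup_apply]
        have := h0 m
        have h2 := hC.2
        split <;> omega
      rw [if_pos hC]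
      simp only [hC, true_and]
      rw [Finset.sum_ite_eq' _ (fup d f₀ l) (fun f => (csgn d f₀ l : ℝ) * α f), if_pos hmem]
    · simp [hC]
  rw [hsum1, hsum2]
  by_cases hE : Even (f₀ l)
  · rw [if_pos hE, zsmul_eq_mul]
    by_cases hp : 0 < f₀ l <;> by_cases hq : f₀ l < 2 * N
    · rw [if_pos ⟨hE, hp⟩, if_pos ⟨hE, hq⟩, if_pos hp, if_pos hq]; ring
    · rw [if_pos ⟨hE, hp⟩, if_neg (fun h => hq h.2), if_pos hp, if_neg hq]; ring
    · rw [if_neg (fun h => hp h.2), if_pos ⟨hE, hq⟩, if_neg hp, if_pos hq]; ring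
    · rw [if_neg (fun h => hp h.2), if_neg (fun h => hq h.2), if_neg hp, if_neg hq]; ring
  · rw [if_neg hE, if_neg (fun h => hE h.1), if_neg (fun h => hE h.1)]
    ring


/-- **Discrete Noether theorem.**
Let `L` be a local Lagrangian on `k`-cochains of the grid `I^d_N`: it assigns
to each field `φ` and each vertex `v` a value `L φ v` depending differentiably
on the values of `φ` and of `δφ` at the faces with maximal vertex `v`, with
partial derivatives packaged as a `k`-cochain `P φ = ∂L[φ]/∂φ` and a
`(k+1)`-cochain `Q φ = ∂L[φ]/∂(δφ)` via the directional-derivative identity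
`(d/dt) L[φ+tΔ](v)|₀ = [P φ ⌢ Δ](v) + [Q φ ⌢ δΔ](v)` (`hloc`), where `⌢` at a
vertex is `[α⌢β](v) = Σ_{f : max f = v} α(f) β(f)`.
Let `φ` be on shell, i.e. stationary for the action `εL[φ]` (the sum of
`L[φ]` over all vertices of the grid).  Then, for a `k`-cochain `Δ`, the
Lagrangian is invariant under the infinitesimal transformation `Δ` — i.e.
`(d/dt) L[φ+tΔ]|_{t=0} = 0` as a function on vertices — if and only if the
current `j[φ] = (∂L[φ]/∂(δφ)) ⌢ Δ` satisfies `∂ j[φ] = 0`. -/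
theorem discrete_noether (d N k : ℕ)
    (L : ((Fin d → ℕ) → ℝ) → (Fin d → ℕ) → ℝ)
    (P Q : ((Fin d → ℕ) → ℝ) → (Fin d → ℕ) → ℝ)
    (hP : ∀ φ f, P φ f ≠ 0 → (oddSet d f).card = k)
    (hQ : ∀ φ f, Q φ f ≠ 0 → (oddSet d f).card = k + 1)
    (hloc : ∀ (φ Δ : (Fin d → ℕ) → ℝ) (v : Fin d → ℕ), isVertex d N v →
      HasDerivAt (fun t : ℝ => L (φ + t • Δ) v)
        (capR d (P φ) Δ v + capR d (Q φ) (cDelta d Δ) v) 0)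
    (φ : (Fin d → ℕ) → ℝ)
    (hφ : ∀ f, φ f ≠ 0 → (oddSet d f).card = k)
    (hshell : ∀ Δ' : (Fin d → ℕ) → ℝ,
      HasDerivAt (fun t : ℝ => ∑ w : Fin d → Fin (N + 1),
        L (φ + t • Δ') (fun m => 2 * (w m : ℕ))) 0 0)
    (Δ : (Fin d → ℕ) → ℝ)
    (hΔ : ∀ f, Δ f ≠ 0 → (oddSet d f).card = k) :
    (∀ v : Fin d → ℕ, isVertex d N v →
        HasDerivAt (fun t : ℝ => L (φ + t • Δ) v) 0 0)
    ↔ (∀ v : Fin d → ℕ, isVertex d N v →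
        cBdry d N (capR d (Q φ) Δ) v = 0) := by
  classical
  -- stationarity of the action in every direction
  have hstat : ∀ Δ' : (Fin d → ℕ) → ℝ,
      (∑ f ∈ Fintype.piFinset (fun _ : Fin d => Finset.range (2 * N + 1)), P φ f * Δ' f)
        + (∑ f ∈ Fintype.piFinset (fun _ : Fin d => Finset.range (2 * N + 1)),
            Q φ f * cDelta d Δ' f) = 0 := by
    intro Δ'
    have hvert : ∀ w : Fin d → Fin (N + 1), isVertex d N (fun m => 2 * (w m : ℕ)) := by
      intro w m
      have := (w m).isLt
      constructor
      · show Even (2 * (w m : ℕ))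
        exact ⟨(w m : ℕ), by ring⟩
      · show 2 * (w m : ℕ) ≤ 2 * N
        omega
    have hder : HasDerivAt
        (fun t : ℝ => ∑ w : Fin d → Fin (N + 1), L (φ + t • Δ') (fun m => 2 * (w m : ℕ)))
        (∑ w : Fin d → Fin (N + 1),
          (capR d (P φ) Δ' (fun m => 2 * (w m : ℕ))
            + capR d (Q φ) (cDelta d Δ') (fun m => 2 * (w m : ℕ)))) 0 :=
      HasDerivAt.fun_sum (fun w _ => hloc φ Δ' _ (hvert w))
    have h0 := (hshell Δ').unique hder
    rw [Finset.sum_add_distrib, sum_vertices, sum_vertices] at h0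
    linarith
  -- Euler–Lagrange equations on grid faces
  have hEL : ∀ f₀ ∈ Fintype.piFinset (fun _ : Fin d => Finset.range (2 * N + 1)),
      P φ f₀ + cBdry d N (Q φ) f₀ = 0 := by
    intro f₀ hf₀
    have hm : ∀ m, f₀ m < 2 * N + 1 :=
      fun m => Finset.mem_range.mp (Fintype.mem_piFinset.mp hf₀ m)
    have h := hstat (fun g => if g = f₀ then 1 else 0)
    rw [sum_cDelta_ind (Q φ) f₀ hm] at h
    have h1 : (∑ f ∈ Fintype.piFinset (fun _ : Fin d => Finset.range (2 * N + 1)),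
        P φ f * (if f = f₀ then (1:ℝ) else 0)) = P φ f₀ := by
      have : ∀ f : Fin d → ℕ, P φ f * (if f = f₀ then (1:ℝ) else 0)
          = if f = f₀ then P φ f else 0 := by
        intro f; split_ifs <;> simp
      rw [Finset.sum_congr rfl (fun f _ => this f),
        Finset.sum_ite_eq' _ f₀ (P φ), if_pos hf₀]
    rw [h1] at h
    exact h
  -- the key pointwise identity
  have hkey : ∀ v : Fin d → ℕ, isVertex d N v → cBdry d N (capR d (Q φ) Δ) v
      = (-1 : ℝ) ^ (k + 1) * (capR d (P φ) Δ v + capR d (Q φ) (cDelta d Δ) v) := by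
    intro v hv
    have hve : ∀ m, Even (v m) := fun m => (hv m).1
    rw [leibniz k (Q φ) Δ (hQ φ) v hve]
    have hBP : capR d (cBdry d N (Q φ)) Δ v = - capR d (P φ) Δ v := by
      rw [capR_vertex _ _ v hve, capR_vertex _ _ v hve, ← Finset.sum_neg_distrib]
      refine Finset.sum_congr rfl fun T _ => ?_
      by_cases hT : ∀ m ∈ T, 0 < v m
      · rw [if_pos hT, if_pos hT]
        have hmem : FT d v T ∈ Fintype.piFinset (fun _ : Fin d => Finset.range (2 * N + 1)) := by
          rw [Fintype.mem_piFinset]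
          intro m
          rw [Finset.mem_range]
          have := (hv m).2
          simp only [FT]
          split <;> omega
        have h2 := hEL _ hmem
        have hq : cBdry d N (Q φ) (FT d v T) = - P φ (FT d v T) := by linarith
        rw [hq]; ring
      · rw [if_neg hT, if_neg hT]; ring
    rw [hBP, pow_succ]
    ring
  constructor
  · intro h v hv
    have h1 := hloc φ Δ v hv
    have h2 := (h v hv).unique h1
    rw [hkey v hv, ← h2, mul_zero]
  · intro h v hv
    have h1 := hloc φ Δ v hv
    have h2 := h v hv
    rw [hkey v hv] at h2
    have hne : ((-1 : ℝ)) ^ (k + 1) ≠ 0 := pow_ne_zero _ (by norm_num)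
    have h3 : capR d (P φ) Δ v + capR d (Q φ) (cDelta d Δ) v = 0 :=
      (mul_eq_zero.mp h2).resolve_left hne
    exact h3 ▸ h1
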